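/- If unique factorization holds in H⁰(ℙ¹, O(•)) ≅ ℂ[s,t] (homogeneous forms), then 4A³ + 27B² = 0 for forms A of degree 4k and B of degree 6k implies there exists a form f of degree 2k with A = -3f² and B = 2f³. -/

import Mathlib

open MvPolynomial

open Finsupp in
lemma aux_isHomogeneous_of_sq {σ R : Type*} [CommRing R] [IsDomain R]
    {g : MvPolynomial σ R} (hg : g ≠ 0) {m : ℕ}
    (h : (g * g).IsHomogeneous m) : ∃ n, g.IsHomogeneous n := by
  classical
  set W : (σ →₀ ℕ) → ℕ := fun d => Finsupp.weight (1 : σ → ℕ) d with hW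
  have hWadd : ∀ a b, W (a + b) = W a + W b := fun a b => map_add _ a b
  have hdegW : ∀ d : σ →₀ ℕ, Finsupp.degree d = W d := by
    intro d; rw [Finsupp.degree_eq_weight_one]; rfl
  have hs : g.support.Nonempty := MvPolynomial.support_nonempty.mpr hg
  obtain ⟨a, haS, haD⟩ := Finset.exists_mem_eq_sup' hs W
  obtain ⟨b, hbS, hbE⟩ := Finset.exists_mem_eq_inf' hs W
  set D : ℕ := g.support.sup' hs W with hD
  set E : ℕ := g.support.inf' hs W with hE
  have key : ∀ (N : ℕ), (∃ c ∈ g.support, W c = N) →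
      ((∀ d ∈ g.support, W d ≤ N) ∨ (∀ d ∈ g.support, N ≤ W d)) →
      N + N = m := by
    intro N hex hbd
    set p : MvPolynomial σ R := homogeneousComponent N g with hp
    have hpcoeff : ∀ d, coeff d p = if W d = N then coeff d g else 0 := by
      intro d
      rw [hp, coeff_homogeneousComponent, hdegW]
    have hpne : p ≠ 0 := by
      obtain ⟨c, hcS, hcN⟩ := hex
      intro h0
      have := hpcoeff c
      rw [h0, if_pos hcN] at this
      exact (MvPolynomial.mem_support_iff.mp hcS) (by simpa using this.symm)
    have hpp : p * p ≠ 0 := mul_ne_zero hpne hpne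
    obtain ⟨u, hu⟩ := MvPolynomial.support_nonempty.mpr hpp
    have hucoeff : coeff u (p * p) ≠ 0 := MvPolynomial.mem_support_iff.mp hu
    have hph : p.IsHomogeneous N := homogeneousComponent_isHomogeneous N g
    have hud : W u = N + N := (hph.mul hph) hucoeff
    have hceq : coeff u (g * g) = coeff u (p * p) := by
      rw [coeff_mul, coeff_mul]
      apply Finset.sum_congr rfl
      intro x hx
      have hxsum : x.1 + x.2 = u := Finset.HasAntidiagonal.mem_antidiagonal.mp hx
      by_cases h1 : coeff x.1 g = 0
      · simp [hpcoeff, h1]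
      by_cases h2 : coeff x.2 g = 0
      · simp [hpcoeff, h2]
      have hx1S : x.1 ∈ g.support := MvPolynomial.mem_support_iff.mpr h1
      have hx2S : x.2 ∈ g.support := MvPolynomial.mem_support_iff.mpr h2
      have hdeg : W x.1 + W x.2 = N + N := by
        rw [← hWadd, hxsum, hud]
      have h1N : W x.1 = N ∧ W x.2 = N := by
        rcases hbd with hle | hge
        · have := hle x.1 hx1S; have := hle x.2 hx2S; omega
        · have := hge x.1 hx1S; have := hge x.2 hx2S; omega
      rw [hpcoeff, hpcoeff, if_pos h1N.1, if_pos h1N.2]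
    have hgg : coeff u (g * g) ≠ 0 := by rw [hceq]; exact hucoeff
    have hm : W u = m := h hgg
    omega
  have hDm : D + D = m := key D ⟨a, haS, haD.symm⟩ (Or.inl fun d hd => Finset.le_sup' W hd)
  have hEm : E + E = m := key E ⟨b, hbS, hbE.symm⟩ (Or.inr fun d hd => Finset.inf'_le W hd)
  refine ⟨D, fun d hd => ?_⟩
  have hdS : d ∈ g.support := MvPolynomial.mem_support_iff.mpr hd
  have h1 : W d ≤ D := Finset.le_sup' W hdS
  have h2 : E ≤ W d := Finset.inf'_le W hdS
  show W d = D
  omega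

/-- if `A`, `B` are homogeneous forms on ℙ¹ (binary forms over ℂ) of
degrees `4k` and `6k` with `4A³ + 27B² = 0`, then by unique factorization there is a
homogeneous form `f` of degree `2k` with `A = -3f²` and `B = 2f³`. -/
theorem stmt_15 (k : ℕ) (A B : MvPolynomial (Fin 2) ℂ)
    (hA : A.IsHomogeneous (4 * k)) (hB : B.IsHomogeneous (6 * k))
    (h : 4 * A ^ 3 + 27 * B ^ 2 = 0) :
    ∃ f : MvPolynomial (Fin 2) ℂ,
      f.IsHomogeneous (2 * k) ∧ A = -3 * f ^ 2 ∧ B = 2 * f ^ 3 := by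
  classical
  by_cases hA0 : A = 0
  · have h27 : (27 : MvPolynomial (Fin 2) ℂ) ≠ 0 := by norm_num
    have hB0 : B = 0 := by
      have h' : (27 : MvPolynomial (Fin 2) ℂ) * B ^ 2 = 0 := by
        have := h; rw [hA0] at this; linear_combination this
      rcases mul_eq_zero.mp h' with h'' | h''
      · exact absurd h'' h27
      · exact pow_eq_zero_iff two_ne_zero |>.mp h''
    exact ⟨0, isHomogeneous_zero _ _ _, by simp [hA0], by simp [hB0]⟩
  · set x : MvPolynomial (Fin 2) ℂ := -12 * A with hx
    set y : MvPolynomial (Fin 2) ℂ := 108 * B with hy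
    have hkey : x ^ 3 = y ^ 2 := by
      rw [hx, hy]; linear_combination (-432 : MvPolynomial (Fin 2) ℂ) * h
    have h12 : (-12 : MvPolynomial (Fin 2) ℂ) ≠ 0 := by norm_num
    have hxne : x ≠ 0 := by
      rw [hx]; exact mul_ne_zero h12 hA0
    have hdvd : x ∣ y := by
      have hsq : x ^ 2 ∣ y ^ 2 := by
        rw [← hkey]; exact ⟨x, by ring⟩
      exact (IsIntegrallyClosed.pow_dvd_pow_iff two_ne_zero).mp hsq
    obtain ⟨c, hc⟩ := hdvd
    have hc2 : c ^ 2 = x := by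
      have hx2 : x ^ 2 ≠ 0 := pow_ne_zero _ hxne
      have heq : x ^ 2 * c ^ 2 = x ^ 2 * x := by
        have h1 : (x * c) ^ 2 = x ^ 3 := by rw [← hc, hkey]
        linear_combination h1
      exact mul_left_cancel₀ hx2 heq
    have hc3 : c ^ 3 = y := by
      have : c ^ 3 = x * c := by rw [← hc2]; ring
      rw [this, ← hc]
    -- homogeneity of c
    have hxhom : x.IsHomogeneous (4 * k) := by
      have h12C : (-12 : MvPolynomial (Fin 2) ℂ) = C (-12 : ℂ) := by
        simp [map_neg, map_ofNat]
      rw [hx, h12C]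
      exact hA.C_mul (-12)
    have hcne : c ≠ 0 := by
      intro hc0
      rw [hc0] at hc2
      exact hxne (by rw [← hc2]; ring)
    have hcc : (c * c).IsHomogeneous (4 * k) := by
      have : c * c = x := by rw [← hc2]; ring
      rw [this]; exact hxhom
    obtain ⟨n, hn⟩ := aux_isHomogeneous_of_sq hcne hcc
    have hn2 : n + n = 4 * k := by
      have h1 : (c * c).IsHomogeneous (n + n) := hn.mul hn
      exact h1.inj_right hcc (mul_ne_zero hcne hcne)
    have hnk : n = 2 * k := by omega
    refine ⟨C (6⁻¹ : ℂ) * c, (hnk ▸ hn).C_mul _, ?_, ?_⟩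
    · have h36 : (C (6⁻¹ : ℂ) : MvPolynomial (Fin 2) ℂ) ^ 2 = C ((36 : ℂ)⁻¹) := by
        rw [← map_pow]; norm_num
      have h3C : (-3 : MvPolynomial (Fin 2) ℂ) = C (-3 : ℂ) := by
        simp [map_neg, map_ofNat]
      have h12C : (-12 : MvPolynomial (Fin 2) ℂ) = C (-12 : ℂ) := by
        simp [map_neg, map_ofNat]
      calc A = C (1 : ℂ) * A := by rw [map_one, one_mul]
        _ = (C (-3 : ℂ) * C ((36:ℂ)⁻¹) * C (-12 : ℂ)) * A := by
            rw [← map_mul, ← map_mul]; norm_num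
        _ = C (-3 : ℂ) * C ((36:ℂ)⁻¹) * x := by rw [hx, h12C]; ring
        _ = C (-3 : ℂ) * C ((36:ℂ)⁻¹) * c ^ 2 := by rw [hc2]
        _ = -3 * (C (6⁻¹ : ℂ) * c) ^ 2 := by rw [h3C, ← h36]; ring
    · have h216 : (C (6⁻¹ : ℂ) : MvPolynomial (Fin 2) ℂ) ^ 3 = C ((216 : ℂ)⁻¹) := by
        rw [← map_pow]; norm_num
      have h2C : (2 : MvPolynomial (Fin 2) ℂ) = C (2 : ℂ) := by
        simp [map_ofNat]
      have h108C : (108 : MvPolynomial (Fin 2) ℂ) = C (108 : ℂ) := by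
        simp [map_ofNat]
      calc B = C (1 : ℂ) * B := by rw [map_one, one_mul]
        _ = (C (2 : ℂ) * C ((216:ℂ)⁻¹) * C (108 : ℂ)) * B := by
            rw [← map_mul, ← map_mul]; norm_num
        _ = C (2 : ℂ) * C ((216:ℂ)⁻¹) * y := by rw [hy, h108C]; ring
        _ = C (2 : ℂ) * C ((216:ℂ)⁻¹) * c ^ 3 := by rw [hc3]
        _ = 2 * (C (6⁻¹ : ℂ) * c) ^ 3 := by rw [h2C, ← h216]; ring
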